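/- arXiv:2212.13157 — 3 statements merged into one kernel-verified Lean document; each statement's English description precedes it below -/
import Mathlib

section
/- Let u > 0 and suppose s ≤ −1 is a real number satisfying s·e^s = −e^{−u−1}. Then s > −1 − √(2u) − u. -/
theorem stmt_7 (u s : ℝ) (hu : u > 0) (hs : s ≤ -1)
    (heq : s * Real.exp s = -Real.exp (-u - 1)) :
    s > -1 - Real.sqrt (2 * u) - u := by
  by_contra h
  push_neg at h
  set a := Real.sqrt (2 * u) with ha_def
  have ha : 0 < a := Real.sqrt_pos.mpr (by linarith)
  have ha2 : a ^ 2 = 2 * u := Real.sq_sqrt (by linarith)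
  set v := -s with hv_def
  have hv1 : (1 : ℝ) ≤ v := by simp [hv_def]; linarith
  have hv0 : 0 < v := by linarith
  -- take logs
  have hexp : v * Real.exp s = Real.exp (-u - 1) := by
    have := heq
    rw [hv_def]; nlinarith [this]
  have hlog : Real.log v + s = -u - 1 := by
    have h1 : Real.exp (Real.log v + s) = Real.exp (-u - 1) := by
      rw [Real.exp_add, Real.exp_log hv0, hexp]
    exact Real.exp_injective h1
  have hu_eq : u = v - 1 - Real.log v := by
    have : s = -v := by rw [hv_def]; ring
    rw [this] at hlog; linarith
  set w := 1 + a + u with hw_def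
  have hw1 : (1 : ℝ) < w := by linarith
  have hvw : w ≤ v := by rw [hv_def, hw_def]; linarith
  -- log w < a since w < exp a
  have hwexp : w < Real.exp a := by
    have h4 : ∑ i ∈ Finset.range 4, a ^ i / (Nat.factorial i) ≤ Real.exp a :=
      Real.sum_le_exp_of_nonneg ha.le 4
    have hsum : ∑ i ∈ Finset.range 4, a ^ i / (Nat.factorial i)
        = 1 + a + a ^ 2 / 2 + a ^ 3 / 6 := by
      simp [Finset.sum_range_succ, Nat.factorial]
    have hcube : 0 < a ^ 3 / 6 := by positivity
    rw [hsum] at h4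
    have : w = 1 + a + a ^ 2 / 2 := by rw [hw_def]; linarith [ha2]
    linarith
  have hlogw : Real.log w < a := by
    have := Real.log_lt_log (by linarith : (0:ℝ) < w) hwexp
    rwa [Real.log_exp] at this
  -- log v ≤ log w + (v - w)
  have hkey : Real.log v ≤ Real.log w + (v - w) := by
    have hratio : Real.log (v / w) ≤ v / w - 1 :=
      Real.log_le_sub_one_of_pos (by positivity)
    rw [Real.log_div (by linarith) (by linarith)] at hratio
    have h2 : v / w - 1 ≤ v - w := by
      rw [div_sub_one (by linarith : w ≠ 0), div_le_iff₀ (by linarith : (0:ℝ) < w)]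
      nlinarith
    linarith
  -- contradiction
  have : u > u := by
    calc u = v - 1 - Real.log v := hu_eq
    _ ≥ v - 1 - (Real.log w + (v - w)) := by linarith
    _ = w - 1 - Real.log w := by ring
    _ > w - 1 - a := by linarith
    _ = u := by rw [hw_def]; ring
  exact lt_irrefl u this
end

section
/- Let σ > 0, set C₁ = 8/log(1+σ⁻²) and C₂ = σ⁻²/log(1+σ⁻²). Suppose (v_i)_{i=1}^{t} are reals with 0 ≤ v_i ≤ 1, (β_i)_{i=1}^{t} is a nondecreasing sequence of positive reals, and (b_i)_{i=1}^{t} is a nonincreasing sequence of reals such that b_i² ≤ 4·β_i·v_i for all i. Let G = (1/2)·∑_{i=1}^{t} log(1 + σ⁻²·v_i). Then b_t ≤ √(C₁·β_t·G / t). -/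
open Finset

lemma log_concave_aux (c x : ℝ) (hc : 0 < c) (hx0 : 0 ≤ x) (hx1 : x ≤ 1) :
    x * Real.log (1 + c) ≤ Real.log (1 + c * x) := by
  have h := strictConcaveOn_log_Ioi.concaveOn.2
    (Set.mem_Ioi.mpr one_pos) (Set.mem_Ioi.mpr (by linarith : (0:ℝ) < 1 + c))
    (by linarith : (0:ℝ) ≤ 1 - x) hx0 (by ring)
  simp only [smul_eq_mul] at h
  have h1 : (1 - x) * 1 + x * (1 + c) = 1 + c * x := by ring
  rw [h1, Real.log_one] at h
  linarith

theorem stmt_12 (σ : ℝ) (hσ : σ > 0) (C₁ C₂ : ℝ)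
    (hC₁ : C₁ = 8 / Real.log (1 + σ⁻¹ ^ 2))
    (hC₂ : C₂ = σ⁻¹ ^ 2 / Real.log (1 + σ⁻¹ ^ 2))
    (t : ℕ) (ht : 1 ≤ t) (v β b : ℕ → ℝ)
    (hv : ∀ i, 1 ≤ i → i ≤ t → 0 ≤ v i ∧ v i ≤ 1)
    (hβpos : ∀ i, 1 ≤ i → i ≤ t → 0 < β i)
    (hβmono : ∀ i j, 1 ≤ i → i ≤ j → j ≤ t → β i ≤ β j)
    (hbmono : ∀ i j, 1 ≤ i → i ≤ j → j ≤ t → b j ≤ b i)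
    (hb : ∀ i, 1 ≤ i → i ≤ t → (b i) ^ 2 ≤ 4 * β i * v i)
    (G : ℝ) (hG : G = (1 / 2) * ∑ i ∈ Finset.Icc 1 t, Real.log (1 + σ⁻¹ ^ 2 * v i)) :
    b t ≤ Real.sqrt (C₁ * β t * G / t) := by
  have hc : (0:ℝ) < σ⁻¹ ^ 2 := by positivity
  have hlog : 0 < Real.log (1 + σ⁻¹ ^ 2) := Real.log_pos (by linarith)
  rcases le_or_gt (b t) 0 with hbt | hbt
  · exact hbt.trans (Real.sqrt_nonneg _)
  have htpos : (0:ℝ) < t := by exact_mod_cast ht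
  have hβt : 0 < β t := hβpos t ht le_rfl
  have hsum : (t : ℝ) * b t ^ 2 ≤ C₁ * β t * G := by
    have h1 : (t:ℝ) * b t ^ 2 = ∑ i ∈ Icc 1 t, b t ^ 2 := by
      rw [Finset.sum_const, Nat.card_Icc, nsmul_eq_mul]
      norm_num
    have h2 : ∑ i ∈ Icc 1 t, b t ^ 2
        ≤ ∑ i ∈ Icc 1 t, (4 * β t) * (Real.log (1 + σ⁻¹ ^ 2 * v i) / Real.log (1 + σ⁻¹ ^ 2)) := by
      apply Finset.sum_le_sum
      intro i hi
      rw [Finset.mem_Icc] at hi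
      obtain ⟨hi1, hi2⟩ := hi
      have hbi : b t ≤ b i := hbmono i t hi1 hi2 le_rfl
      have hsq : b t ^ 2 ≤ b i ^ 2 := pow_le_pow_left₀ hbt.le hbi 2
      have hvi := hv i hi1 hi2
      have hlogv : v i * Real.log (1 + σ⁻¹ ^ 2) ≤ Real.log (1 + σ⁻¹ ^ 2 * v i) :=
        log_concave_aux _ _ hc hvi.1 hvi.2
      have hvle : v i ≤ Real.log (1 + σ⁻¹ ^ 2 * v i) / Real.log (1 + σ⁻¹ ^ 2) :=
        (le_div_iff₀ hlog).mpr hlogv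
      have hβi : β i ≤ β t := hβmono i t hi1 hi2 le_rfl
      have h3 : (b i) ^ 2 ≤ 4 * β t * v i := by
        calc (b i)^2 ≤ 4 * β i * v i := hb i hi1 hi2
          _ ≤ 4 * β t * v i := by nlinarith [hvi.1]
      calc b t ^ 2 ≤ b i ^ 2 := hsq
        _ ≤ 4 * β t * v i := h3
        _ ≤ 4 * β t * (Real.log (1 + σ⁻¹ ^ 2 * v i) / Real.log (1 + σ⁻¹ ^ 2)) := by
            apply mul_le_mul_of_nonneg_left hvle (by positivity)
    have h4 : ∑ i ∈ Icc 1 t, (4 * β t) * (Real.log (1 + σ⁻¹ ^ 2 * v i) / Real.log (1 + σ⁻¹ ^ 2))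
        = C₁ * β t * G := by
      rw [← Finset.mul_sum, ← Finset.sum_div, hC₁, hG]
      field_simp
      ring
    linarith
  have hdiv : b t ^ 2 ≤ C₁ * β t * G / t := by
    rw [le_div_iff₀ htpos]
    linarith
  calc b t = Real.sqrt (b t ^ 2) := (Real.sqrt_sq hbt.le).symm
    _ ≤ Real.sqrt (C₁ * β t * G / t) := Real.sqrt_le_sqrt hdiv
end

section
/- Let ε > 0 and suppose for every i with 1 ≤ i ≤ t we have ε² ≤ β_i·v_i with 0 ≤ v_i ≤ 1 and 0 < β_i ≤ β_t (β nondecreasing). Let σ > 0, C₁ = 8/log(1+σ⁻²), C₂ = σ⁻²/log(1+σ⁻²), and G = (1/2)∑_{i=1}^t log(1+σ⁻²·v_i). Then C₁·β_t·G ≥ 4·t·ε², i.e., 2ε ≤ √(C₁·β_t·G/t). -/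
/-- `v * log (1+x) ≤ log (1 + v*x)` for `0 ≤ v ≤ 1`, `0 < x`. -/
lemma aux_log_concave {x v : ℝ} (hx : 0 < x) (hv0 : 0 ≤ v) (hv1 : v ≤ 1) :
    v * Real.log (1 + x) ≤ Real.log (1 + v * x) := by
  have h1 : (0:ℝ) < 1 + x := by linarith
  have h2 : (1 + x) ^ v ≤ 1 + v * x :=
    rpow_one_add_le_one_add_mul_self (by linarith) hv0 hv1
  have h3 : (0:ℝ) < (1 + x) ^ v := Real.rpow_pos_of_pos h1 v
  calc v * Real.log (1 + x) = Real.log ((1 + x) ^ v) := (Real.log_rpow h1 v).symm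
    _ ≤ Real.log (1 + v * x) := Real.log_le_log h3 h2

theorem stmt_16 (ε : ℝ) (hε : ε > 0) (σ : ℝ) (hσ : σ > 0) (C₁ C₂ : ℝ)
    (hC₁ : C₁ = 8 / Real.log (1 + σ⁻¹ ^ 2))
    (hC₂ : C₂ = σ⁻¹ ^ 2 / Real.log (1 + σ⁻¹ ^ 2))
    (t : ℕ) (ht : 1 ≤ t) (v β : ℕ → ℝ)
    (hv : ∀ i, 1 ≤ i → i ≤ t → 0 ≤ v i ∧ v i ≤ 1)
    (hβpos : ∀ i, 1 ≤ i → i ≤ t → 0 < β i)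
    (hβle : ∀ i, 1 ≤ i → i ≤ t → β i ≤ β t)
    (hεβ : ∀ i, 1 ≤ i → i ≤ t → ε ^ 2 ≤ β i * v i)
    (G : ℝ) (hG : G = (1 / 2) * ∑ i ∈ Finset.Icc 1 t, Real.log (1 + σ⁻¹ ^ 2 * v i)) :
    C₁ * β t * G ≥ 4 * t * ε ^ 2 ∧ 2 * ε ≤ Real.sqrt (C₁ * β t * G / t) := by
  have hx : (0:ℝ) < σ⁻¹ ^ 2 := by positivity
  have hL : 0 < Real.log (1 + σ⁻¹ ^ 2) := Real.log_pos (by linarith)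
  set L := Real.log (1 + σ⁻¹ ^ 2) with hLdef
  have hβt : 0 < β t := hβpos t ht le_rfl
  -- each term: log(1 + σ⁻²  v i) ≥ v i * L ≥ (ε²/β t) * L
  have hterm : ∀ i ∈ Finset.Icc 1 t, ε ^ 2 / β t * L ≤ Real.log (1 + σ⁻¹ ^ 2 * v i) := by
    intro i hi
    rw [Finset.mem_Icc] at hi
    obtain ⟨h1, h2⟩ := hi
    obtain ⟨hv0, hv1⟩ := hv i h1 h2
    have hvi : ε ^ 2 / β t ≤ v i := by
      rw [div_le_iff₀ hβt]
      calc ε ^ 2 ≤ β i * v i := hεβ i h1 h2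
        _ ≤ β t * v i := mul_le_mul_of_nonneg_right (hβle i h1 h2) hv0
        _ = v i * β t := mul_comm _ _
    calc ε ^ 2 / β t * L ≤ v i * L := by
          apply mul_le_mul_of_nonneg_right hvi hL.le
      _ ≤ Real.log (1 + σ⁻¹ ^ 2 * v i) := by rw [mul_comm (σ⁻¹^2)]; exact aux_log_concave hx hv0 hv1
  have hsum : (t : ℝ) * (ε ^ 2 / β t * L) ≤
      ∑ i ∈ Finset.Icc 1 t, Real.log (1 + σ⁻¹ ^ 2 * v i) := by
    have := Finset.card_nsmul_le_sum (Finset.Icc 1 t)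
      (fun i => Real.log (1 + σ⁻¹ ^ 2 * v i)) (ε ^ 2 / β t * L) hterm
    simpa [Nat.card_Icc, nsmul_eq_mul] using this
  have hGge : G ≥ (t : ℝ) * (ε ^ 2 / β t * L) / 2 := by
    rw [hG]; linarith
  have htpos : (0:ℝ) < t := by exact_mod_cast ht
  have hmain : C₁ * β t * G ≥ 4 * t * ε ^ 2 := by
    rw [hC₁]
    have h8 : (0:ℝ) < 8 / L := by positivity
    have : 8 / L * β t * G ≥ 8 / L * β t * ((t : ℝ) * (ε ^ 2 / β t * L) / 2) := by
      apply mul_le_mul_of_nonneg_left hGge (by positivity)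
    calc 8 / L * β t * G ≥ 8 / L * β t * ((t : ℝ) * (ε ^ 2 / β t * L) / 2) := this
      _ = 4 * t * ε ^ 2 := by field_simp; ring
  refine ⟨hmain, ?_⟩
  have h4 : (2 * ε) ^ 2 ≤ C₁ * β t * G / t := by
    rw [le_div_iff₀ htpos]
    nlinarith
  calc 2 * ε = Real.sqrt ((2 * ε) ^ 2) := (Real.sqrt_sq (by positivity)).symm
    _ ≤ Real.sqrt (C₁ * β t * G / t) := Real.sqrt_le_sqrt h4
end
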